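/- A minimal monomial sequence f_1, ..., f_n in a polynomial ring over a field is a d-sequence if and only if gcd(f_i,f_j) divides f_k for all i < j < k and gcd(f_i, f_j) = gcd(f_i, f_j^2) for all i < j. -/

import Mathlib

open MvPolynomial

/-- A sequence `f_0,…,f_{n-1}` (0-based) is a d-sequence if it minimally
generates its ideal (for monomials: no `f_i` divides `f_j` for `i ≠ j`) and
`(f_0,…,f_{i-1}) : (f_i f_k) = (f_0,…,f_{i-1}) : f_k` for all `i ≤ k`. -/
def IsDSequence {R : Type*} [CommRing R] {n : ℕ} (f : Fin n → R) : Prop :=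
  (∀ i j : Fin n, i ≠ j → ¬f i ∣ f j) ∧
    ∀ i k : Fin n, i ≤ k →
      (Ideal.span (f '' {j | j < i})).colon (Ideal.span {f i * f k}) =
        (Ideal.span (f '' {j | j < i})).colon (Ideal.span {f k})

private lemma aux_mem_colon {K : Type*} [Field K] {m n : ℕ} (a : Fin n → (Fin m →₀ ℕ))
    (i : Fin n) (b : Fin m →₀ ℕ) (p : MvPolynomial (Fin m) K) :
    p ∈ (Ideal.span ((fun s => monomial s (1 : K)) '' (a '' {j | j < i}))).colon
        (Ideal.span {monomial b (1 : K)}) ↔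
      ∀ c ∈ p.support, ∃ j, j < i ∧ a j ≤ c + b := by
  rw [Ideal.mem_colon_span_singleton, mem_ideal_span_monomial_image]
  constructor
  · intro h c hc
    have hcb : c + b ∈ (p * monomial b (1 : K)).support := by
      rw [mem_support_iff, coeff_mul_monomial, mul_one]
      exact mem_support_iff.mp hc
    obtain ⟨s, hs, hle⟩ := h _ hcb
    obtain ⟨j, hj, rfl⟩ := hs
    exact ⟨j, hj, hle⟩
  · intro h c hc
    rw [mem_support_iff, coeff_mul_monomial'] at hc
    split_ifs at hc with hbc
    · have hmem : c - b ∈ p.support := by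
        rw [mem_support_iff]
        intro h0
        rw [h0, zero_mul] at hc
        exact hc rfl
      obtain ⟨j, hj, hle⟩ := h _ hmem
      refine ⟨a j, ⟨j, hj, rfl⟩, ?_⟩
      rwa [tsub_add_cancel_of_le hbc] at hle
    · exact absurd rfl hc

/-- A minimal monomial sequence `f_1,…,f_n` in `K[x_1,…,x_m]` is a d-sequence
iff `gcd(f_i,f_j) ∣ f_k` for all `i < j < k` and `gcd(f_i,f_j) = gcd(f_i,f_j²)`
for all `i < j`. -/
theorem stmt_5 {K : Type*} [Field K] {m n : ℕ} (a : Fin n → (Fin m →₀ ℕ))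
    (f : Fin n → MvPolynomial (Fin m) K) (hf : ∀ i, f i = monomial (a i) 1)
    (hmin : ∀ i j : Fin n, i ≠ j → ¬f i ∣ f j) :
    IsDSequence f ↔
      (∀ i j k : Fin n, i < j → j < k →
          (monomial (a i ⊓ a j) (1 : K)) ∣ monomial (a k) 1) ∧
        ∀ i j : Fin n, i < j → a i ⊓ a j = a i ⊓ (a j + a j) := by
  classical
  have hset : ∀ i : Fin n,
      f '' {j | j < i} = (fun s => monomial s (1 : K)) '' (a '' {j | j < i}) := by
    intro i
    ext q
    simp only [Set.mem_image, Set.mem_setOf_eq, exists_exists_and_eq_and]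
    exact ⟨fun ⟨j, hj, hq⟩ => ⟨j, hj, by rw [← hf j]; exact hq⟩,
      fun ⟨j, hj, hq⟩ => ⟨j, hj, by rw [hf j]; exact hq⟩⟩
  have hcol : ∀ (i : Fin n) (b : Fin m →₀ ℕ) (p : MvPolynomial (Fin m) K),
      p ∈ (Ideal.span (f '' {j | j < i})).colon (Ideal.span {monomial b (1 : K)}) ↔
        ∀ c ∈ p.support, ∃ j, j < i ∧ a j ≤ c + b := by
    intro i b p
    rw [hset i]
    exact aux_mem_colon a i b p
  -- the colon condition, reformulated combinatorially
  have hcond : ∀ i k : Fin n,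
      ((Ideal.span (f '' {j | j < i})).colon (Ideal.span {f i * f k}) =
        (Ideal.span (f '' {j | j < i})).colon (Ideal.span {f k})) ↔
      (∀ c : Fin m →₀ ℕ, (∃ j, j < i ∧ a j ≤ c + (a i + a k)) →
        ∃ j, j < i ∧ a j ≤ c + a k) := by
    intro i k
    have h1 : f i * f k = monomial (a i + a k) (1 : K) := by
      rw [hf i, hf k, monomial_mul, one_mul]
    constructor
    · intro h c hc
      have hm : (monomial c (1 : K)) ∈
          (Ideal.span (f '' {j | j < i})).colon (Ideal.span {f i * f k}) := by
        rw [h1, hcol]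
        intro c' hc'
        rw [support_monomial, if_neg (one_ne_zero (α := K)), Finset.mem_singleton] at hc'
        subst hc'
        exact hc
      rw [h, hf k, hcol] at hm
      exact hm c (by
        rw [support_monomial, if_neg (one_ne_zero (α := K))]
        exact Finset.mem_singleton_self c)
    · intro h
      ext p
      rw [h1, hf k, hcol, hcol]
      constructor
      · intro hp c hc
        exact h c (hp c hc)
      · intro hp c hc
        obtain ⟨j, hj, hle⟩ := hp c hc
        exact ⟨j, hj, hle.trans (add_le_add_right le_add_self c)⟩
  have hmin' : ∀ i j : Fin n, i ≠ j → ¬ a i ≤ a j := by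
    intro i j hij hle
    refine hmin i j hij ⟨monomial (a j - a i) 1, ?_⟩
    rw [hf i, hf j, monomial_mul, one_mul, add_tsub_cancel_of_le hle]
  constructor
  · -- forward direction
    intro hd
    have hP : ∀ i k : Fin n, i ≤ k → ∀ c : Fin m →₀ ℕ,
        (∃ j, j < i ∧ a j ≤ c + (a i + a k)) → ∃ j, j < i ∧ a j ≤ c + a k :=
      fun i k hik => (hcond i k).mp (hd.2 i k hik)
    have key : ∀ j : Fin n,
        (∀ i i' : Fin n, i < i' → i' < j → ∀ t, min (a i t) (a i' t) ≤ a j t) ∧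
        (∀ i : Fin n, i < j → ∀ t, a j t < a i t → a j t = 0) := by
      intro j
      obtain ⟨N, hN⟩ : ∃ N, (j : ℕ) = N := ⟨j, rfl⟩
      induction N using Nat.strong_induction_on generalizing j with
      | _ N ihN =>
      have ih : ∀ j' : Fin n, j' < j →
          (∀ i i' : Fin n, i < i' → i' < j' → ∀ t, min (a i t) (a i' t) ≤ a j' t) ∧
          (∀ i : Fin n, i < j' → ∀ t, a j' t < a i t → a j' t = 0) :=
        fun j' hj' => ihN j' (hN ▸ hj') j' rfl
      have hA : ∀ i i' : Fin n, i < i' → i' < j → ∀ t, min (a i t) (a i' t) ≤ a j t := by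
        intro i i' hii' hi'j t
        have hyp : ∃ l, l < i' ∧ a l ≤ (a i - (a i ⊓ (a i' + a j))) + (a i' + a j) := by
          refine ⟨i, hii', Finsupp.le_def.mpr fun s => ?_⟩
          simp only [Finsupp.tsub_apply, Finsupp.add_apply, Finsupp.inf_apply]
          omega
        obtain ⟨l, hl, hle⟩ := hP i' j hi'j.le _ hyp
        by_cases hli : l = i
        · subst hli
          have h1 := Finsupp.le_def.mp hle t
          simp only [Finsupp.tsub_apply, Finsupp.add_apply, Finsupp.inf_apply] at h1
          omega
        · exfalso
          have hlj : l ≠ j := Fin.ne_of_lt (hl.trans hi'j)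
          obtain ⟨s, hs⟩ : ∃ s, a j s < a l s := by
            by_contra hcon
            push_neg at hcon
            exact hmin' l j hlj (Finsupp.le_def.mpr hcon)
          have h1 := Finsupp.le_def.mp hle s
          simp only [Finsupp.tsub_apply, Finsupp.add_apply, Finsupp.inf_apply] at h1
          have hAs : min (a i s) (a l s) ≤ a i' s := by
            rcases lt_or_gt_of_ne (Ne.symm hli) with h | h
            · have := (ih i' hi'j).1 i l h hl s
              omega
            · have := (ih i' hi'j).1 l i h hii' s
              omega
          have hBs := (ih i' hi'j).2 i hii' s
          omega
      refine ⟨hA, ?_⟩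
      intro i hij t
      have hyp : ∃ l, l < j ∧ a l ≤ (a i - (a i ⊓ (a j + a j))) + (a j + a j) := by
        refine ⟨i, hij, Finsupp.le_def.mpr fun s => ?_⟩
        simp only [Finsupp.tsub_apply, Finsupp.add_apply, Finsupp.inf_apply]
        omega
      obtain ⟨l, hl, hle⟩ := hP j j le_rfl _ hyp
      by_cases hli : l = i
      · subst hli
        have h1 := Finsupp.le_def.mp hle t
        simp only [Finsupp.tsub_apply, Finsupp.add_apply, Finsupp.inf_apply] at h1
        omega
      · intro hlt
        exfalso
        obtain ⟨s, hs⟩ : ∃ s, a j s < a l s := by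
          by_contra hcon
          push_neg at hcon
          exact hmin' l j (Fin.ne_of_lt hl) (Finsupp.le_def.mpr hcon)
        have h1 := Finsupp.le_def.mp hle s
        simp only [Finsupp.tsub_apply, Finsupp.add_apply, Finsupp.inf_apply] at h1
        have hAs : min (a i s) (a l s) ≤ a j s := by
          rcases lt_or_gt_of_ne (Ne.symm hli) with h | h
          · have := hA i l h hl s
            omega
          · have := hA l i h hij s
            omega
        omega
    constructor
    · intro i j k hij hjk
      have h := (key k).1 i j hij hjk
      have hle : a i ⊓ a j ≤ a k := by
        refine Finsupp.le_def.mpr fun t => ?_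
        have := h t
        simp only [Finsupp.inf_apply]
        exact this
      exact ⟨monomial (a k - (a i ⊓ a j)) 1, by
        rw [monomial_mul, one_mul, add_tsub_cancel_of_le hle]⟩
    · intro i j hij
      have h := (key j).2 i hij
      ext t
      simp only [Finsupp.inf_apply, Finsupp.add_apply]
      have := h t
      omega
  · -- backward direction
    rintro ⟨hA, hB⟩
    refine ⟨hmin, fun i k hik => (hcond i k).mpr ?_⟩
    rintro c ⟨j, hji, hle⟩
    refine ⟨j, hji, Finsupp.le_def.mpr fun t => ?_⟩
    have h1 := Finsupp.le_def.mp hle t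
    simp only [Finsupp.add_apply] at h1 ⊢
    have hjk : j < k := lt_of_lt_of_le hji hik
    have hBji : min (a j t) (a i t) = min (a j t) (a i t + a i t) := by
      have := hB j i hji
      have h2 := congrArg (fun g : Fin m →₀ ℕ => g t) this
      simpa [Finsupp.inf_apply, Finsupp.add_apply] using h2
    rcases eq_or_lt_of_le hik with heq | hlt
    · subst heq
      omega
    · have hBjk : min (a j t) (a k t) = min (a j t) (a k t + a k t) := by
        have := hB j k hjk
        have h2 := congrArg (fun g : Fin m →₀ ℕ => g t) this
        simpa [Finsupp.inf_apply, Finsupp.add_apply] using h2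
      have hAt : min (a j t) (a i t) ≤ a k t := by
        have hdvd := hA j i k hji hlt
        have hle2 : a j ⊓ a i ≤ a k :=
          ((monomial_dvd_monomial.mp hdvd).1.resolve_left (one_ne_zero (α := K)))
        have := Finsupp.le_def.mp hle2 t
        simpa [Finsupp.inf_apply] using this
      omega
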